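/- Let x = (B₁,B₂,i,j) and x' = (B₁',B₂',i',j') be ADHM data such that B₁ and B₁' have no common eigenvalue, and let T denote the tensor product construction on ADHM data (using the unique solutions of the associated Sylvester equations). Then the tensor product commutes with dualization: T(x^∨, x'^∨) = T(x,x')^∨, where x^∨ = (B₁^∨, B₂^∨, −j^∨, i^∨) and the dual of a datum on (Ṽ, W̃) is taken on (Ṽ^∨, W̃^∨) with the natural identifications (V⊗W' ⊕ W⊗V')^∨ ≅ V^∨⊗W'^∨ ⊕ W^∨⊗V'^∨ and (W⊗W')^∨ ≅ W^∨⊗W'^∨. -/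

import Mathlib

open TensorProduct

section tensorADHM

variable {V W V' W' : Type*}
  [AddCommGroup V] [Module ℂ V] [AddCommGroup W] [Module ℂ W]
  [AddCommGroup V'] [Module ℂ V'] [AddCommGroup W'] [Module ℂ W']

/-- first component `B̃₁` of the tensor product ADHM datum. -/
noncomputable def tB1 (B₁ : V →ₗ[ℂ] V) (B₁' : V' →ₗ[ℂ] V') :
    (V ⊗[ℂ] W') × (W ⊗[ℂ] V') →ₗ[ℂ] (V ⊗[ℂ] W') × (W ⊗[ℂ] V') :=
  (TensorProduct.map B₁ LinearMap.id).prodMap (TensorProduct.map LinearMap.id B₁')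

/-- second component `B̃₂` of the tensor product ADHM datum, with off-diagonal blocks `X, Y`. -/
noncomputable def tB2 (B₂ : V →ₗ[ℂ] V) (B₂' : V' →ₗ[ℂ] V')
    (Xs : W ⊗[ℂ] V' →ₗ[ℂ] V ⊗[ℂ] W') (Ys : V ⊗[ℂ] W' →ₗ[ℂ] W ⊗[ℂ] V') :
    (V ⊗[ℂ] W') × (W ⊗[ℂ] V') →ₗ[ℂ] (V ⊗[ℂ] W') × (W ⊗[ℂ] V') :=
  LinearMap.prod
    ((TensorProduct.map B₂ LinearMap.id) ∘ₗ (LinearMap.fst ℂ _ _) + Xs ∘ₗ (LinearMap.snd ℂ _ _))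
    (Ys ∘ₗ (LinearMap.fst ℂ _ _) + (TensorProduct.map LinearMap.id B₂') ∘ₗ (LinearMap.snd ℂ _ _))

/-- framing-in component `ĩ` of the tensor product ADHM datum. -/
noncomputable def tI (i : W →ₗ[ℂ] V) (i' : W' →ₗ[ℂ] V') :
    W ⊗[ℂ] W' →ₗ[ℂ] (V ⊗[ℂ] W') × (W ⊗[ℂ] V') :=
  LinearMap.prod (TensorProduct.map i LinearMap.id) (TensorProduct.map LinearMap.id i')

/-- framing-out component `j̃` of the tensor product ADHM datum. -/
noncomputable def tJ (j : V →ₗ[ℂ] W) (j' : V' →ₗ[ℂ] W') :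
    (V ⊗[ℂ] W') × (W ⊗[ℂ] V') →ₗ[ℂ] W ⊗[ℂ] W' :=
  LinearMap.coprod (TensorProduct.map j LinearMap.id) (TensorProduct.map LinearMap.id j')

end tensorADHM

open Module

section helpersStmt14
open Polynomial

variable {M N M₂ N₂ : Type*} [AddCommGroup M] [Module ℂ M] [AddCommGroup N] [Module ℂ N]
  [AddCommGroup M₂] [Module ℂ M₂] [AddCommGroup N₂] [Module ℂ N₂]

lemma aeval_conj (A : Module.End ℂ N) (B : Module.End ℂ M) (D : M →ₗ[ℂ] N)
    (h : A ∘ₗ D = D ∘ₗ B) (q : ℂ[X]) :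
    (aeval A q : N →ₗ[ℂ] N) ∘ₗ D = D ∘ₗ (aeval B q : M →ₗ[ℂ] M) := by
  have hpow : ∀ n : ℕ, (A ^ n : N →ₗ[ℂ] N) ∘ₗ D = D ∘ₗ (B ^ n : M →ₗ[ℂ] M) := by
    intro n
    induction n with
    | zero => ext x; simp
    | succ n ih =>
      have e1 : (A ^ (n+1) : N →ₗ[ℂ] N) = A ∘ₗ (A ^ n : N →ₗ[ℂ] N) := by
        rw [pow_succ']; rfl
      have e2 : (B ^ (n+1) : M →ₗ[ℂ] M) = B ∘ₗ (B ^ n : M →ₗ[ℂ] M) := by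
        rw [pow_succ']; rfl
      rw [e1, e2, LinearMap.comp_assoc, ih, ← LinearMap.comp_assoc, h, LinearMap.comp_assoc]
  induction q using Polynomial.induction_on' with
  | add p q hp hq => simp [hp, hq, LinearMap.add_comp, LinearMap.comp_add]
  | monomial n a =>
    simp only [aeval_monomial]
    ext x
    simp only [LinearMap.coe_comp, Function.comp_apply, Module.algebraMap_end_apply,
      Module.End.mul_apply, LinearMap.map_smul]
    have := LinearMap.congr_fun (hpow n) x
    simp only [LinearMap.coe_comp, Function.comp_apply] at this
    rw [this]

lemma sylv_unique_surj (A : Module.End ℂ N) (B : Module.End ℂ M) (D : M →ₗ[ℂ] N)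
    (h : A ∘ₗ D = D ∘ₗ B) (p : ℂ[X]) (hA : aeval A p = 0)
    (hB : Function.Surjective (aeval B p : M →ₗ[ℂ] M)) : D = 0 := by
  have := aeval_conj A B D h p
  rw [hA] at this
  ext x
  obtain ⟨y, rfl⟩ := hB x
  have := LinearMap.congr_fun this.symm y
  simpa using this

lemma sylv_unique_inj (A : Module.End ℂ N) (B : Module.End ℂ M) (D : M →ₗ[ℂ] N)
    (h : A ∘ₗ D = D ∘ₗ B) (p : ℂ[X]) (hB : aeval B p = 0)
    (hA : Function.Injective (aeval A p : N →ₗ[ℂ] N)) : D = 0 := by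
  have := aeval_conj A B D h p
  rw [hB] at this
  ext x
  have h0 := LinearMap.congr_fun this x
  simp only [LinearMap.comp_zero, LinearMap.zero_apply, LinearMap.coe_comp,
    Function.comp_apply] at h0 ⊢
  exact hA (by simpa using h0)

lemma dualMap_pow (f : M →ₗ[ℂ] M) (n : ℕ) :
    ((f ^ n : M →ₗ[ℂ] M).dualMap : Module.End ℂ (Dual ℂ M)) = (f.dualMap) ^ n := by
  induction n with
  | zero => ext x; simp [LinearMap.dualMap_apply]
  | succ n ih =>
    have : (f ^ (n+1) : M →ₗ[ℂ] M) = (f ^ n : M →ₗ[ℂ] M) ∘ₗ f := by rw [pow_succ]; rfl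
    rw [this, ← LinearMap.dualMap_comp_dualMap, ih, pow_succ']
    rfl

lemma aeval_dualMap (f : M →ₗ[ℂ] M) (q : ℂ[X]) :
    (aeval (LinearMap.dualMap f) q : Module.End ℂ (Dual ℂ M))
      = (aeval f q : M →ₗ[ℂ] M).dualMap := by
  induction q using Polynomial.induction_on' with
  | add p q hp hq =>
    ext x y
    simp only [map_add, LinearMap.add_apply, hp, hq, LinearMap.dualMap_apply]
  | monomial n a =>
    simp only [aeval_monomial]
    ext x y
    simp only [Module.End.mul_apply, Module.algebraMap_end_apply, LinearMap.map_smul,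
      LinearMap.smul_apply, LinearMap.dualMap_apply]
    rw [← dualMap_pow]
    rfl

lemma aeval_rT {f : M →ₗ[ℂ] M} (q : ℂ[X]) :
    (aeval (TensorProduct.map f (LinearMap.id : N →ₗ[ℂ] N)) q : Module.End ℂ (M ⊗[ℂ] N))
      = TensorProduct.map (aeval f q : M →ₗ[ℂ] M) LinearMap.id := by
  have hpow : ∀ n : ℕ, ((TensorProduct.map f (LinearMap.id : N →ₗ[ℂ] N)) ^ n
      : Module.End ℂ (M ⊗[ℂ] N)) = TensorProduct.map (f ^ n : M →ₗ[ℂ] M) LinearMap.id := by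
    intro n
    induction n with
    | zero => ext x y; simp
    | succ n ih =>
      rw [pow_succ, pow_succ]
      show ((TensorProduct.map f LinearMap.id)^n : Module.End ℂ (M ⊗[ℂ] N))
        ∘ₗ TensorProduct.map f LinearMap.id = _
      rw [ih, ← TensorProduct.map_comp]
      rfl
  induction q using Polynomial.induction_on' with
  | add p q hp hq =>
    rw [map_add, map_add, hp, hq]
    ext x y
    simp [TensorProduct.add_tmul, TensorProduct.tmul_add]
  | monomial n a =>
    rw [aeval_monomial, aeval_monomial]
    ext x y
    simp only [Module.End.mul_apply, Module.algebraMap_end_apply, hpow,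
      TensorProduct.map_tmul, LinearMap.map_smul]
    simp [TensorProduct.smul_tmul']

lemma aeval_lT {f : N →ₗ[ℂ] N} (q : ℂ[X]) :
    (aeval (TensorProduct.map (LinearMap.id : M →ₗ[ℂ] M) f) q : Module.End ℂ (M ⊗[ℂ] N))
      = TensorProduct.map LinearMap.id (aeval f q : N →ₗ[ℂ] N) := by
  have hpow : ∀ n : ℕ, ((TensorProduct.map (LinearMap.id : M →ₗ[ℂ] M) f) ^ n
      : Module.End ℂ (M ⊗[ℂ] N)) = TensorProduct.map LinearMap.id (f ^ n : N →ₗ[ℂ] N) := by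
    intro n
    induction n with
    | zero => ext x y; simp
    | succ n ih =>
      rw [pow_succ, pow_succ]
      show ((TensorProduct.map LinearMap.id f)^n : Module.End ℂ (M ⊗[ℂ] N))
        ∘ₗ TensorProduct.map LinearMap.id f = _
      rw [ih, ← TensorProduct.map_comp]
      rfl
  induction q using Polynomial.induction_on' with
  | add p q hp hq =>
    rw [map_add, map_add, hp, hq]
    ext x y
    simp [TensorProduct.add_tmul, TensorProduct.tmul_add]
  | monomial n a =>
    rw [aeval_monomial, aeval_monomial]
    ext x y
    simp only [Module.End.mul_apply, Module.algebraMap_end_apply, hpow,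
      TensorProduct.map_tmul, LinearMap.map_smul]
    simp [TensorProduct.smul_tmul']

lemma dd_nat (f : M →ₗ[ℂ] M₂) (g : N →ₗ[ℂ] N₂) :
    (TensorProduct.dualDistrib ℂ M N) ∘ₗ TensorProduct.map f.dualMap g.dualMap
      = (TensorProduct.map f g).dualMap ∘ₗ TensorProduct.dualDistrib ℂ M₂ N₂ := by
  ext φ ψ m n
  simp

lemma dde_coe [Module.Finite ℂ M] [Module.Free ℂ M] [Module.Finite ℂ N] [Module.Free ℂ N] :
    ((TensorProduct.dualDistribEquiv ℂ M N).toLinearMap) = TensorProduct.dualDistrib ℂ M N :=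
  rfl

lemma dde_apply [Module.Finite ℂ M] [Module.Free ℂ M] [Module.Finite ℂ N] [Module.Free ℂ N]
    (x : Dual ℂ M ⊗[ℂ] Dual ℂ N) :
    (TensorProduct.dualDistribEquiv ℂ M N) x = TensorProduct.dualDistrib ℂ M N x :=
  LinearMap.congr_fun dde_coe x

lemma map_neg_left (f : M →ₗ[ℂ] M₂) (g : N →ₗ[ℂ] N₂) :
    TensorProduct.map (-f) g = - TensorProduct.map f g := by
  ext m n
  simp [TensorProduct.neg_tmul]

lemma aeval_minpoly_isUnit {V V' : Type*} [AddCommGroup V] [Module ℂ V] [FiniteDimensional ℂ V]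
    [AddCommGroup V'] [Module ℂ V'] [FiniteDimensional ℂ V']
    (B₁ : V →ₗ[ℂ] V) (B₁' : V' →ₗ[ℂ] V')
    (hdisj : ∀ c : ℂ, ¬(Module.End.HasEigenvalue B₁ c ∧ Module.End.HasEigenvalue B₁' c)) :
    IsUnit (aeval B₁' (minpoly ℂ B₁) : V' →ₗ[ℂ] V') := by
  set p := minpoly ℂ B₁ with hp
  set q := minpoly ℂ B₁' with hq
  have hpn : p ≠ 0 := minpoly.ne_zero (Algebra.IsIntegral.isIntegral B₁)
  have hcop : IsCoprime p q := by
    rw [← EuclideanDomain.gcd_isUnit_iff]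
    by_contra hg
    have hgd : EuclideanDomain.gcd p q ∣ p := EuclideanDomain.gcd_dvd_left p q
    have hgq : EuclideanDomain.gcd p q ∣ q := EuclideanDomain.gcd_dvd_right p q
    have hgn : EuclideanDomain.gcd p q ≠ 0 := fun h => hpn (by simpa [h] using hgd)
    obtain ⟨c, hc⟩ := Complex.exists_root
      (Polynomial.degree_pos_of_ne_zero_of_nonunit hgn hg)
    exact hdisj c ⟨(Module.End.hasEigenvalue_iff_isRoot).mpr (hc.dvd hgd),
      (Module.End.hasEigenvalue_iff_isRoot).mpr (hc.dvd hgq)⟩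
  obtain ⟨a, b, hab⟩ := hcop
  have h1 : (aeval B₁' (a * p + b * q) : V' →ₗ[ℂ] V') = 1 := by rw [hab]; simp
  have hq0 : (aeval B₁' q : V' →ₗ[ℂ] V') = 0 := minpoly.aeval ℂ B₁'
  rw [map_add, map_mul, map_mul, hq0, mul_zero, add_zero] at h1
  have hcomm : (aeval B₁' p : V' →ₗ[ℂ] V') * aeval B₁' a = aeval B₁' a * aeval B₁' p := by
    rw [← map_mul, ← map_mul, mul_comm]
  exact ⟨⟨aeval B₁' p, aeval B₁' a, hcomm.trans h1, h1⟩, rfl⟩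

end helpersStmt14

set_option maxHeartbeats 1600000 in
/-- the tensor product of ADHM data commutes with dualization:
`T(x^∨, x'^∨) = T(x,x')^∨` under the natural identifications
`(V⊗W' ⊕ W⊗V')^∨ ≅ V^∨⊗W'^∨ ⊕ W^∨⊗V'^∨` and `(W⊗W')^∨ ≅ W^∨⊗W'^∨`, where
`x^∨ = (B₁^∨,B₂^∨,−j^∨,i^∨)` and `X', Y'` are the (unique) Sylvester solutions for the
dual data. -/
theorem stmt14
    (V W V' W' : Type*)
    [AddCommGroup V] [Module ℂ V] [FiniteDimensional ℂ V]
    [AddCommGroup W] [Module ℂ W] [FiniteDimensional ℂ W]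
    [AddCommGroup V'] [Module ℂ V'] [FiniteDimensional ℂ V']
    [AddCommGroup W'] [Module ℂ W'] [FiniteDimensional ℂ W']
    (B₁ B₂ : V →ₗ[ℂ] V) (i : W →ₗ[ℂ] V) (j : V →ₗ[ℂ] W)
    (B₁' B₂' : V' →ₗ[ℂ] V') (i' : W' →ₗ[ℂ] V') (j' : V' →ₗ[ℂ] W')
    (hdisj : ∀ c : ℂ, ¬(Module.End.HasEigenvalue B₁ c ∧ Module.End.HasEigenvalue B₁' c))
    -- the Sylvester solutions for (x, x'):
    (Xs : W ⊗[ℂ] V' →ₗ[ℂ] V ⊗[ℂ] W') (Ys : V ⊗[ℂ] W' →ₗ[ℂ] W ⊗[ℂ] V')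
    (hX : (TensorProduct.map B₁ LinearMap.id) ∘ₗ Xs
        - Xs ∘ₗ (TensorProduct.map LinearMap.id B₁') + TensorProduct.map i j' = 0)
    (hY : (TensorProduct.map LinearMap.id B₁') ∘ₗ Ys
        - Ys ∘ₗ (TensorProduct.map B₁ LinearMap.id) + TensorProduct.map j i' = 0)
    -- the Sylvester solutions for the dual data (x^∨, x'^∨):
    (Xd : Dual ℂ W ⊗[ℂ] Dual ℂ V' →ₗ[ℂ] Dual ℂ V ⊗[ℂ] Dual ℂ W')
    (Yd : Dual ℂ V ⊗[ℂ] Dual ℂ W' →ₗ[ℂ] Dual ℂ W ⊗[ℂ] Dual ℂ V')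
    (hXd : (TensorProduct.map B₁.dualMap LinearMap.id) ∘ₗ Xd
        - Xd ∘ₗ (TensorProduct.map LinearMap.id B₁'.dualMap)
        + TensorProduct.map (-j.dualMap) i'.dualMap = 0)
    (hYd : (TensorProduct.map LinearMap.id B₁'.dualMap) ∘ₗ Yd
        - Yd ∘ₗ (TensorProduct.map B₁.dualMap LinearMap.id)
        + TensorProduct.map i.dualMap (-j'.dualMap) = 0) :
    -- the natural identifications:
    ∀ (Φ : ((Dual ℂ V ⊗[ℂ] Dual ℂ W') × (Dual ℂ W ⊗[ℂ] Dual ℂ V')) ≃ₗ[ℂ]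
        Dual ℂ ((V ⊗[ℂ] W') × (W ⊗[ℂ] V')))
      (Ψ : (Dual ℂ W ⊗[ℂ] Dual ℂ W') ≃ₗ[ℂ] Dual ℂ (W ⊗[ℂ] W')),
      Φ = ((TensorProduct.dualDistribEquiv ℂ V W').prodCongr
            (TensorProduct.dualDistribEquiv ℂ W V')).trans
            (Module.dualProdDualEquivDual ℂ (V ⊗[ℂ] W') (W ⊗[ℂ] V')) →
      Ψ = TensorProduct.dualDistribEquiv ℂ W W' →
      -- T(x^∨, x'^∨) = T(x,x')^∨ componentwise:
      (Φ.toLinearMap ∘ₗ tB1 B₁.dualMap B₁'.dualMap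
          = (tB1 B₁ B₁').dualMap ∘ₗ Φ.toLinearMap) ∧
      (Φ.toLinearMap ∘ₗ tB2 B₂.dualMap B₂'.dualMap Xd Yd
          = (tB2 B₂ B₂' Xs Ys).dualMap ∘ₗ Φ.toLinearMap) ∧
      (Φ.toLinearMap ∘ₗ tI (-j.dualMap) (-j'.dualMap)
          = (-(tJ j j').dualMap) ∘ₗ Ψ.toLinearMap) ∧
      (Ψ.toLinearMap ∘ₗ tJ i.dualMap i'.dualMap
          = (tI i i').dualMap ∘ₗ Φ.toLinearMap) := by
  intro Φ Ψ hΦ hΨ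
  subst hΦ; subst hΨ
  have hPhi : (((TensorProduct.dualDistribEquiv ℂ V W').prodCongr
            (TensorProduct.dualDistribEquiv ℂ W V')).trans
            (Module.dualProdDualEquivDual ℂ (V ⊗[ℂ] W') (W ⊗[ℂ] V'))).toLinearMap
      = (Module.dualProdDualEquivDual ℂ (V ⊗[ℂ] W') (W ⊗[ℂ] V')).toLinearMap ∘ₗ
        (TensorProduct.dualDistrib ℂ V W').prodMap (TensorProduct.dualDistrib ℂ W V') := rfl
  have hPsi : (TensorProduct.dualDistribEquiv ℂ W W').toLinearMap
      = TensorProduct.dualDistrib ℂ W W' := rfl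
  -- the candidate off-diagonal blocks obtained by dualizing `Ys` and `Xs`
  set X₀ : Dual ℂ W ⊗[ℂ] Dual ℂ V' →ₗ[ℂ] Dual ℂ V ⊗[ℂ] Dual ℂ W' :=
    (TensorProduct.dualDistribEquiv ℂ V W').symm.toLinearMap ∘ₗ Ys.dualMap ∘ₗ
      (TensorProduct.dualDistribEquiv ℂ W V').toLinearMap with hX₀def
  set Y₀ : Dual ℂ V ⊗[ℂ] Dual ℂ W' →ₗ[ℂ] Dual ℂ W ⊗[ℂ] Dual ℂ V' :=
    (TensorProduct.dualDistribEquiv ℂ W V').symm.toLinearMap ∘ₗ Xs.dualMap ∘ₗ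
      (TensorProduct.dualDistribEquiv ℂ V W').toLinearMap with hY₀def
  have hcompX : TensorProduct.dualDistrib ℂ V W' ∘ₗ X₀
      = Ys.dualMap ∘ₗ TensorProduct.dualDistrib ℂ W V' := by
    apply LinearMap.ext; intro x
    simp only [hX₀def, LinearMap.coe_comp, Function.comp_apply, LinearEquiv.coe_coe]
    rw [← dde_apply, LinearEquiv.apply_symm_apply, dde_apply]
  have hcompY : TensorProduct.dualDistrib ℂ W V' ∘ₗ Y₀
      = Xs.dualMap ∘ₗ TensorProduct.dualDistrib ℂ V W' := by
    apply LinearMap.ext; intro x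
    simp only [hY₀def, LinearMap.coe_comp, Function.comp_apply, LinearEquiv.coe_coe]
    rw [← dde_apply, LinearEquiv.apply_symm_apply, dde_apply]
  have hcompX' := LinearMap.congr_fun hcompX
  have hcompY' := LinearMap.congr_fun hcompY
  simp only [LinearMap.coe_comp, Function.comp_apply] at hcompX' hcompY'
  -- naturality
  have n₁ : TensorProduct.dualDistrib ℂ V W' ∘ₗ TensorProduct.map B₁.dualMap LinearMap.id
      = (TensorProduct.map B₁ LinearMap.id).dualMap ∘ₗ TensorProduct.dualDistrib ℂ V W' := by
    have := dd_nat B₁ (LinearMap.id : W' →ₗ[ℂ] W')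
    rwa [LinearMap.dualMap_id] at this
  have n₂ : TensorProduct.dualDistrib ℂ W V' ∘ₗ TensorProduct.map LinearMap.id B₁'.dualMap
      = (TensorProduct.map LinearMap.id B₁').dualMap ∘ₗ TensorProduct.dualDistrib ℂ W V' := by
    have := dd_nat (LinearMap.id : W →ₗ[ℂ] W) B₁'
    rwa [LinearMap.dualMap_id] at this
  have n₃ : TensorProduct.dualDistrib ℂ V W' ∘ₗ TensorProduct.map j.dualMap i'.dualMap
      = (TensorProduct.map j i').dualMap ∘ₗ TensorProduct.dualDistrib ℂ W V' := dd_nat j i'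
  have n₄ : TensorProduct.dualDistrib ℂ W V' ∘ₗ TensorProduct.map i.dualMap j'.dualMap
      = (TensorProduct.map i j').dualMap ∘ₗ TensorProduct.dualDistrib ℂ V W' := dd_nat i j'
  have n₁' := LinearMap.congr_fun n₁
  have n₂' := LinearMap.congr_fun n₂
  have n₃' := LinearMap.congr_fun n₃
  have n₄' := LinearMap.congr_fun n₄
  simp only [LinearMap.coe_comp, Function.comp_apply] at n₁' n₂' n₃' n₄'
  have hinj1 : Function.Injective (TensorProduct.dualDistrib ℂ V W') :=
    fun a b h => (TensorProduct.dualDistribEquiv ℂ V W').injective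
      (by rw [dde_apply, dde_apply]; exact h)
  have hinj2 : Function.Injective (TensorProduct.dualDistrib ℂ W V') :=
    fun a b h => (TensorProduct.dualDistribEquiv ℂ W V').injective
      (by rw [dde_apply, dde_apply]; exact h)
  -- `X₀` satisfies the Sylvester equation of `Xd`
  have hX0 : (TensorProduct.map B₁.dualMap LinearMap.id) ∘ₗ X₀
        - X₀ ∘ₗ (TensorProduct.map LinearMap.id B₁'.dualMap)
        + TensorProduct.map (-j.dualMap) i'.dualMap = 0 := by
    rw [map_neg_left]
    apply LinearMap.ext; intro x
    apply hinj1
    simp only [LinearMap.add_apply, LinearMap.sub_apply, LinearMap.neg_apply,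
      LinearMap.coe_comp, Function.comp_apply, map_add, map_sub, map_neg,
      LinearMap.zero_apply, map_zero]
    rw [n₁' (X₀ x), hcompX' x, hcompX' (TensorProduct.map LinearMap.id B₁'.dualMap x),
      n₂' x, n₃' x]
    set t := TensorProduct.dualDistrib ℂ W V' x with ht
    apply LinearMap.ext; intro y
    have h' := congrArg t (LinearMap.congr_fun hY y)
    simp only [LinearMap.add_apply, LinearMap.sub_apply, LinearMap.coe_comp,
      Function.comp_apply, map_add, map_sub, LinearMap.zero_apply, map_zero] at h'
    simp only [LinearMap.add_apply, LinearMap.sub_apply, LinearMap.neg_apply,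
      LinearMap.coe_comp, Function.comp_apply, LinearMap.dualMap_apply,
      LinearMap.zero_apply]
    linear_combination -h'
  -- `Y₀` satisfies the Sylvester equation of `Yd`
  have hY0 : (TensorProduct.map LinearMap.id B₁'.dualMap) ∘ₗ Y₀
        - Y₀ ∘ₗ (TensorProduct.map B₁.dualMap LinearMap.id)
        + TensorProduct.map i.dualMap (-j'.dualMap) = 0 := by
    have hmn : TensorProduct.map i.dualMap (-j'.dualMap)
        = - TensorProduct.map i.dualMap j'.dualMap := by
      ext m n
      simp [TensorProduct.tmul_neg]
    rw [hmn]
    apply LinearMap.ext; intro x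
    apply hinj2
    simp only [LinearMap.add_apply, LinearMap.sub_apply, LinearMap.neg_apply,
      LinearMap.coe_comp, Function.comp_apply, map_add, map_sub, map_neg,
      LinearMap.zero_apply, map_zero]
    rw [n₂' (Y₀ x), hcompY' x, hcompY' (TensorProduct.map B₁.dualMap LinearMap.id x),
      n₁' x, n₄' x]
    set t := TensorProduct.dualDistrib ℂ V W' x with ht
    apply LinearMap.ext; intro y
    have h' := congrArg t (LinearMap.congr_fun hX y)
    simp only [LinearMap.add_apply, LinearMap.sub_apply, LinearMap.coe_comp,
      Function.comp_apply, map_add, map_sub, LinearMap.zero_apply, map_zero] at h'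
    simp only [LinearMap.add_apply, LinearMap.sub_apply, LinearMap.neg_apply,
      LinearMap.coe_comp, Function.comp_apply, LinearMap.dualMap_apply,
      LinearMap.zero_apply]
    linear_combination -h'
  -- uniqueness data
  set p := minpoly ℂ B₁ with hpdef
  have h0 : (Polynomial.aeval B₁ p : V →ₗ[ℂ] V) = 0 := minpoly.aeval ℂ B₁
  have hbij : Function.Bijective (Polynomial.aeval B₁' p : V' →ₗ[ℂ] V') :=
    (Module.End.isUnit_iff _).mp (aeval_minpoly_isUnit B₁ B₁' hdisj)
  have hA0 : (Polynomial.aeval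
      (TensorProduct.map B₁.dualMap (LinearMap.id : Dual ℂ W' →ₗ[ℂ] Dual ℂ W')) p
        : Module.End ℂ (Dual ℂ V ⊗[ℂ] Dual ℂ W')) = 0 := by
    rw [aeval_rT, aeval_dualMap, h0]
    have hd0 : (0 : V →ₗ[ℂ] V).dualMap = 0 := by ext φ v; simp
    rw [hd0]
    ext m n
    simp
  have hBbij : Function.Bijective ((Polynomial.aeval
      (TensorProduct.map (LinearMap.id : Dual ℂ W →ₗ[ℂ] Dual ℂ W) B₁'.dualMap) p
        : Module.End ℂ (Dual ℂ W ⊗[ℂ] Dual ℂ V')) : _ → _) := by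
    rw [aeval_lT, aeval_dualMap]
    exact (TensorProduct.congr (LinearEquiv.refl ℂ (Dual ℂ W))
      (LinearEquiv.ofBijective (Polynomial.aeval B₁' p : V' →ₗ[ℂ] V') hbij).dualMap).bijective
  -- `Xd = X₀`
  have hXX : Xd = X₀ := by
    have hD : TensorProduct.map B₁.dualMap LinearMap.id ∘ₗ (Xd - X₀)
        = (Xd - X₀) ∘ₗ TensorProduct.map LinearMap.id B₁'.dualMap := by
      apply LinearMap.ext; intro x
      have a1 := LinearMap.congr_fun hXd x
      have a2 := LinearMap.congr_fun hX0 x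
      simp only [LinearMap.add_apply, LinearMap.sub_apply, LinearMap.coe_comp,
        Function.comp_apply, LinearMap.zero_apply, map_sub] at a1 a2 ⊢
      linear_combination (norm := module) a1 - a2
    exact sub_eq_zero.mp (sylv_unique_surj _ _ _ hD p hA0 hBbij.surjective)
  -- `Yd = Y₀`
  have hYY : Yd = Y₀ := by
    have hD : TensorProduct.map LinearMap.id B₁'.dualMap ∘ₗ (Yd - Y₀)
        = (Yd - Y₀) ∘ₗ TensorProduct.map B₁.dualMap LinearMap.id := by
      apply LinearMap.ext; intro x
      have a1 := LinearMap.congr_fun hYd x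
      have a2 := LinearMap.congr_fun hY0 x
      simp only [LinearMap.add_apply, LinearMap.sub_apply, LinearMap.coe_comp,
        Function.comp_apply, LinearMap.zero_apply, map_sub] at a1 a2 ⊢
      linear_combination (norm := module) a1 - a2
    exact sub_eq_zero.mp (sylv_unique_inj _ _ _ hD p hA0 hBbij.injective)
  refine ⟨?_, ?_, ?_, ?_⟩
  · rw [hPhi]
    ext φ ψ <;>
    simp [tB1, Module.dualProdDualEquivDual_apply, LinearMap.coprod_apply,
      LinearMap.dualMap_apply]
  · rw [hPhi, hXX, hYY]
    ext φ ψ <;>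
    simp [tB2, Module.dualProdDualEquivDual_apply, LinearMap.coprod_apply,
      LinearMap.dualMap_apply, hcompX', hcompY']
  · rw [hPhi, hPsi]
    ext φ ψ <;>
    simp [tI, tJ, Module.dualProdDualEquivDual_apply, LinearMap.coprod_apply,
      LinearMap.dualMap_apply]
  · rw [hPhi, hPsi]
    ext φ ψ <;>
    simp [tI, tJ, Module.dualProdDualEquivDual_apply, LinearMap.coprod_apply,
      LinearMap.dualMap_apply]
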